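/- arXiv:2208.11291 — 3 statements merged into one kernel-verified Lean document; each statement's English description precedes it below -/
import Mathlib

section
/- For any real number z, both roots λ of the quadratic equation (1 + z²)λ² − 2λ + 1 = 0 satisfy |λ| ≤ 1. -/
theorem aux_abs_le (z : ℝ) (lam : ℂ) (s : ℝ)
    (h : (1 + (z:ℂ)^2) * lam = 1 + s * Complex.I * z) (hs : s = 1 ∨ s = -1) :
    ‖lam‖ ≤ 1 := by
  have hz : (0:ℝ) < 1 + z^2 := by positivity
  have hne : ((1 + z^2 : ℝ) : ℂ) ≠ 0 := by exact_mod_cast hz.ne'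
  have hc : (1 + (z:ℂ)^2) = ((1 + z^2 : ℝ) : ℂ) := by push_cast; ring
  have hl : lam = (1 + (s:ℂ) * Complex.I * z) / ((1 + z^2 : ℝ) : ℂ) := by
    rw [eq_div_iff hne, ← hc, mul_comm]; exact h
  have hs2 : s^2 = 1 := by rcases hs with h | h <;> simp [h]
  have habs : ‖lam‖ ^ 2 = 1 / (1 + z^2) := by
    rw [hl, norm_div, div_pow, Complex.sq_norm, Complex.sq_norm,
      Complex.normSq_apply, Complex.normSq_apply]
    simp [Complex.add_re, Complex.add_im, Complex.mul_re, Complex.mul_im]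
    simp [← Complex.ofReal_pow]
    field_simp
    linear_combination z^2 * hs2
  have h1 : ‖lam‖ ^ 2 ≤ 1 := by
    rw [habs]
    rw [div_le_one hz]; nlinarith
  nlinarith [norm_nonneg lam]

/-- For any real number `z`, both roots `λ` of the quadratic equation
`(1 + z²)λ² − 2λ + 1 = 0` satisfy `|λ| ≤ 1`. -/
theorem stability_roots_modulus_le_one (z : ℝ) (lam : ℂ)
    (hroot : (1 + (z : ℂ) ^ 2) * lam ^ 2 - 2 * lam + 1 = 0) :
    ‖lam‖ ≤ 1 := by
  have key : ((1 + (z:ℂ)^2) * lam - 1 - Complex.I * z) *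
      ((1 + (z:ℂ)^2) * lam - 1 + Complex.I * z) = 0 := by
    linear_combination (1 + (z:ℂ)^2) * hroot - (z:ℂ)^2 * Complex.I_sq
  rcases mul_eq_zero.mp key with h | h
  · exact aux_abs_le z lam 1 (by push_cast; linear_combination h) (Or.inl rfl)
  · exact aux_abs_le z lam (-1) (by push_cast; linear_combination h) (Or.inr rfl)
end

section
/- Suppose ψⁿ, Aⁿ solve the semi-discrete Lorenz-gauge system ℒψⁿ⁺¹ = 2ψⁿ − ψⁿ⁻¹ + (1/(α²ε₀))ρⁿ⁺¹ and ℒAⁿ⁺¹ = 2Aⁿ − Aⁿ⁻¹ + (μ₀/α²)Jⁿ⁺¹, with ℒ = I − α⁻²Δ invertible and commuting with ∇·. Define the gauge residual εⁿ = (ψⁿ − ψⁿ⁻¹)/(c²Δt) + ∇·Aⁿ, where c² = 1/(μ₀ε₀) and α = 1/(cΔt). Then εⁿ⁺¹ = ℒ⁻¹( 2εⁿ − εⁿ⁻¹ + (μ₀/α²)( (ρⁿ⁺¹ − ρⁿ)/Δt + ∇·Jⁿ⁺¹ ) ). -/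
/-- Residual recursion for the semi-discrete Lorenz gauge condition.  Here `V` is a space
of scalar fields, `W` a space of vector fields, `L` (resp. `LW`) the invertible modified
Helmholtz operator on scalar (resp. vector) fields, and `dvg` the divergence operator,
which commutes with `L`.  If `ψ, A` solve the semi-discrete Lorenz-gauge system, then the
gauge residual `ε n = (ψ n − ψ (n−1))/(c²Δt) + ∇·(A n)` satisfies
`ε (n+1) = L⁻¹(2 ε n − ε (n−1) + (μ₀/α²)((ρ (n+1) − ρ n)/Δt + ∇·(J (n+1))))`. -/
theorem semiDiscrete_gauge_residual_recursion
    {V W : Type*} [AddCommGroup V] [Module ℝ V] [AddCommGroup W] [Module ℝ W]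
    (L : V ≃ₗ[ℝ] V) (LW : W ≃ₗ[ℝ] W) (dvg : W →ₗ[ℝ] V)
    (hcomm : ∀ w : W, dvg (LW w) = L (dvg w))
    (c Δt α ε₀ μ₀ : ℝ)
    (hc : 0 < c) (hΔt : 0 < Δt) (hα : 0 < α) (hε₀ : 0 < ε₀) (hμ₀ : 0 < μ₀)
    (hlight : c ^ 2 * μ₀ * ε₀ = 1) (hαdef : α * (c * Δt) = 1)
    (ψ ρ : ℤ → V) (A J : ℤ → W)
    (hψ : ∀ n : ℤ, L (ψ (n + 1)) =
      (2 : ℝ) • ψ n - ψ (n - 1) + (1 / (α ^ 2 * ε₀)) • ρ (n + 1))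
    (hA : ∀ n : ℤ, LW (A (n + 1)) =
      (2 : ℝ) • A n - A (n - 1) + (μ₀ / α ^ 2) • J (n + 1))
    (ε : ℤ → V)
    (hε : ∀ n : ℤ, ε n = (1 / (c ^ 2 * Δt)) • (ψ n - ψ (n - 1)) + dvg (A n)) :
    ∀ n : ℤ, ε (n + 1) =
      L.symm ((2 : ℝ) • ε n - ε (n - 1) +
        (μ₀ / α ^ 2) • ((1 / Δt) • (ρ (n + 1) - ρ n) + dvg (J (n + 1)))) := by
  intro n
  rw [LinearEquiv.eq_symm_apply]
  have h1 := hψ n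
  have h2 := hψ (n - 1)
  rw [sub_add_cancel] at h2
  have h3 := hA n
  rw [hε (n+1), hε n, hε (n-1)]
  rw [add_sub_cancel_right]
  rw [map_add, map_smul, map_sub, h1, h2, ← hcomm, h3]
  rw [map_add, map_sub, map_smul, map_smul]
  have hμ : μ₀ = 1 / (c ^ 2 * ε₀) := by
    field_simp
    linarith [hlight]
  rw [hμ]
  match_scalars <;> field_simp <;> ring
end

section
/- The free-space one-dimensional solution formula satisfies: if w(x) = (α/2)∫ₐᵇ e^{−α|x−y|} f(y) dy with f twice continuously differentiable extended continuously, then for x in (a,b), w(x) − (1/α²) w''(x) = f(x). -/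
/-- The free-space one-dimensional integral solution is a particular solution of the
modified Helmholtz equation: if `w(x) = (α/2)∫ₐᵇ e^{−α|x−y|} f(y) dy` with `f` twice
continuously differentiable, then for all `x ∈ (a,b)`,
`w(x) − (1/α²) w''(x) = f(x)`. -/
theorem free_space_solution_modified_helmholtz (α a b : ℝ) (hα : 0 < α) (hab : a < b)
    (f : ℝ → ℝ) (hf : ContDiff ℝ 2 f)
    (w : ℝ → ℝ)
    (hw : ∀ x, w x = (α / 2) * ∫ y in a..b, Real.exp (-α * |x - y|) * f y) :
    ∀ x ∈ Set.Ioo a b, w x - (1 / α ^ 2) * deriv (deriv w) x = f x := by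
  have hfc : Continuous f := hf.continuous
  set F : ℝ → ℝ := fun x => ∫ y in a..x, Real.exp (α * y) * f y with hFdef
  set G : ℝ → ℝ := fun x => ∫ y in x..b, Real.exp (-α * y) * f y with hGdef
  have hcF : Continuous fun y => Real.exp (α * y) * f y := by continuity
  have hcG : Continuous fun y => Real.exp (-α * y) * f y := by continuity
  have hF : ∀ x, HasDerivAt F (Real.exp (α * x) * f x) x := fun x =>
    intervalIntegral.integral_hasDerivAt_right (hcF.intervalIntegrable _ _)
      (hcF.stronglyMeasurableAtFilter _ _) hcF.continuousAt
  have hG : ∀ x, HasDerivAt G (-(Real.exp (-α * x) * f x)) x := fun x =>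
    intervalIntegral.integral_hasDerivAt_left (hcG.intervalIntegrable _ _)
      (hcG.stronglyMeasurableAtFilter _ _) hcG.continuousAt
  set v : ℝ → ℝ := fun x => (α / 2) * (Real.exp (-α * x) * F x + Real.exp (α * x) * G x) with hvdef
  set u : ℝ → ℝ := fun x => (α ^ 2 / 2) * (Real.exp (α * x) * G x - Real.exp (-α * x) * F x) with hudef
  have e1 : ∀ x : ℝ, HasDerivAt (fun x => Real.exp (-α * x)) (Real.exp (-α * x) * (-α * 1)) x :=
    fun x => ((hasDerivAt_id x).const_mul (-α)).exp
  have e2 : ∀ x : ℝ, HasDerivAt (fun x => Real.exp (α * x)) (Real.exp (α * x) * (α * 1)) x :=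
    fun x => ((hasDerivAt_id x).const_mul α).exp
  have hv : ∀ x, HasDerivAt v (u x) x := by
    intro x
    have h := (((e1 x).mul (hF x)).add ((e2 x).mul (hG x))).const_mul (α / 2)
    refine h.congr_deriv ?_
    simp only [hudef]
    ring
  have hu : ∀ x, HasDerivAt u (α ^ 2 * v x - α ^ 2 * f x) x := by
    intro x
    have h := (((e2 x).mul (hG x)).sub ((e1 x).mul (hF x))).const_mul (α ^ 2 / 2)
    refine h.congr_deriv ?_
    have key : Real.exp (α * x) * Real.exp (-α * x) = 1 := by
      rw [← Real.exp_add]; ring_nf; exact Real.exp_zero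
    simp only [hvdef]
    linear_combination (-(α ^ 2 * f x)) * key
  -- w = v on Ioo a b
  have hwv : Set.EqOn w v (Set.Ioo a b) := by
    intro x hx
    obtain ⟨hax, hxb⟩ := hx
    have hcx : Continuous fun y => Real.exp (-α * |x - y|) * f y := by continuity
    have hsplit : (∫ y in a..b, Real.exp (-α * |x - y|) * f y)
        = (∫ y in a..x, Real.exp (-α * |x - y|) * f y)
          + ∫ y in x..b, Real.exp (-α * |x - y|) * f y :=
      (intervalIntegral.integral_add_adjacent_intervals (hcx.intervalIntegrable _ _)
        (hcx.intervalIntegrable _ _)).symm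
    have hL : (∫ y in a..x, Real.exp (-α * |x - y|) * f y)
        = Real.exp (-α * x) * F x := by
      rw [hFdef, ← intervalIntegral.integral_const_mul]
      apply intervalIntegral.integral_congr
      intro y hy
      dsimp only
      rw [Set.uIcc_of_le hax.le] at hy
      have : |x - y| = x - y := abs_of_nonneg (by linarith [hy.2])
      rw [this, ← mul_assoc, ← Real.exp_add]
      ring_nf
    have hR : (∫ y in x..b, Real.exp (-α * |x - y|) * f y)
        = Real.exp (α * x) * G x := by
      rw [hGdef, ← intervalIntegral.integral_const_mul]
      apply intervalIntegral.integral_congr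
      intro y hy
      dsimp only
      rw [Set.uIcc_of_le hxb.le] at hy
      have : |x - y| = y - x := by
        rw [abs_sub_comm]; exact abs_of_nonneg (by linarith [hy.1])
      rw [this, ← mul_assoc, ← Real.exp_add]
      ring_nf
    rw [hw x, hsplit, hL, hR]
  intro x hx
  have hmem : Set.Ioo a b ∈ nhds x := isOpen_Ioo.mem_nhds hx
  have hd1 : Set.EqOn (deriv w) (deriv v) (Set.Ioo a b) := by
    intro z hz
    exact Filter.EventuallyEq.deriv_eq
      (Filter.eventuallyEq_of_mem (isOpen_Ioo.mem_nhds hz) hwv)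
  have hd2 : deriv (deriv w) x = deriv (deriv v) x :=
    Filter.EventuallyEq.deriv_eq (Filter.eventuallyEq_of_mem hmem hd1)
  have hdv : deriv v = u := funext fun z => (hv z).deriv
  have hdu : deriv u x = α ^ 2 * v x - α ^ 2 * f x := (hu x).deriv
  rw [hwv hx, hd2, hdv, hdu]
  have hα2 : α ^ 2 ≠ 0 := pow_ne_zero 2 hα.ne'
  field_simp
  ring
end
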